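/- Let η > 0 with m = ⌊η⌋, and let F : ℝ^p → ℝ^k be m-times continuously differentiable with ‖∇^i F(x)‖ ≤ 1 for all x and all 0 ≤ i ≤ m, and with ∇^m F being (η − m)-Hölder with constant 1, i.e. ‖∇^m F(x) − ∇^m F(y)‖ ≤ ‖x−y‖^{η−m}. Let γ : [0,1] → ℝ^p be a piecewise C¹ path with γ(0) = x₂ and γ(1) = x₁. Then ‖F(x₁) − Σ_{i=0}^{m} ∇^i F(x₂)·(x₁ − x₂)^{i}/i!‖ ≤ (∫₀¹ ‖γ'(t)‖ dt)^{η}. -/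

import Mathlib

open Set Finset

lemma hasDerivAt_iteratedFDeriv_line {p k : ℕ}
    {F : EuclideanSpace ℝ (Fin p) → EuclideanSpace ℝ (Fin k)} {i : ℕ}
    (hdiff : Differentiable ℝ (iteratedFDeriv ℝ i F))
    (x₂ v : EuclideanSpace ℝ (Fin p)) (t : ℝ) :
    HasDerivAt (fun s => iteratedFDeriv ℝ i F (x₂ + s • v) (fun _ => v))
      (iteratedFDeriv ℝ (i + 1) F (x₂ + t • v) (fun _ => v)) t := by
  have hc : HasDerivAt (fun s : ℝ => x₂ + s • v) v t := by
    simpa using ((hasDerivAt_id t).smul_const v).const_add x₂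
  have hG : HasFDerivAt (iteratedFDeriv ℝ i F)
      (fderiv ℝ (iteratedFDeriv ℝ i F) (x₂ + t • v)) (x₂ + t • v) := (hdiff _).hasFDerivAt
  have h1 : HasDerivAt (fun s => iteratedFDeriv ℝ i F (x₂ + s • v))
      (fderiv ℝ (iteratedFDeriv ℝ i F) (x₂ + t • v) v) t := hG.comp_hasDerivAt t hc
  exact (ContinuousMultilinearMap.apply ℝ (fun _ : Fin i => EuclideanSpace ℝ (Fin p))
      (EuclideanSpace ℝ (Fin k)) (fun _ => v)).hasFDerivAt.comp_hasDerivAt t h1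

lemma taylor_remainder_core (p k m : ℕ) (ε : ℝ) (hε : 0 ≤ ε)
    (F : EuclideanSpace ℝ (Fin p) → EuclideanSpace ℝ (Fin k))
    (hF : ContDiff ℝ (m : ℕ) F)
    (hHol : ∀ x y, ‖iteratedFDeriv ℝ m F x - iteratedFDeriv ℝ m F y‖ ≤ ‖x - y‖ ^ ε)
    (x₁ x₂ : EuclideanSpace ℝ (Fin p)) :
    ‖F x₁ - ∑ i ∈ Finset.range (m + 1),
        (i.factorial : ℝ)⁻¹ • iteratedFDeriv ℝ i F x₂ (fun _ => x₁ - x₂)‖ ≤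
      ‖x₁ - x₂‖ ^ (ε + m) := by
  set v := x₁ - x₂ with hv
  obtain _ | n := m
  · -- m = 0
    have hs : ∑ i ∈ Finset.range (0 + 1),
        (i.factorial : ℝ)⁻¹ • iteratedFDeriv ℝ i F x₂ (fun _ => v) = F x₂ := by
      simp
    rw [hs]
    have := hHol x₁ x₂
    rw [show iteratedFDeriv ℝ 0 F x₁ - iteratedFDeriv ℝ 0 F x₂
        = (continuousMultilinearCurryFin0 ℝ (EuclideanSpace ℝ (Fin p))
            (EuclideanSpace ℝ (Fin k))).symm (F x₁ - F x₂) by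
          simp [iteratedFDeriv_zero_eq_comp]; ext; simp, LinearIsometryEquiv.norm_map] at this
    simpa using this
  · -- m = n + 1
    set c : ℝ → EuclideanSpace ℝ (Fin p) := fun t => x₂ + t • v with hc
    set ψ : ℝ → EuclideanSpace ℝ (Fin k) := fun t =>
      (∑ i ∈ Finset.range (n + 1),
        ((i.factorial : ℝ)⁻¹ * (1 - t) ^ i) • iteratedFDeriv ℝ i F (c t) (fun _ => v)) +
      (((n + 1).factorial : ℝ)⁻¹ * (1 - t) ^ (n + 1)) •
        iteratedFDeriv ℝ (n + 1) F x₂ (fun _ => v) with hψ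
    set ψ' : ℝ → EuclideanSpace ℝ (Fin k) := fun t =>
      ((n.factorial : ℝ)⁻¹ * (1 - t) ^ n) •
        (iteratedFDeriv ℝ (n + 1) F (c t) (fun _ => v)
          - iteratedFDeriv ℝ (n + 1) F x₂ (fun _ => v)) with hψ'
    have key : ∀ t : ℝ, HasDerivAt ψ (ψ' t) t := by
      intro t
      set W : ℕ → EuclideanSpace ℝ (Fin k) := fun j =>
        ((j.factorial : ℝ)⁻¹ * j * (1 - t) ^ (j - 1)) •
          iteratedFDeriv ℝ j F (c t) (fun _ => v) with hW
      have hsum : HasDerivAt (fun s => ∑ i ∈ Finset.range (n + 1),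
          ((i.factorial : ℝ)⁻¹ * (1 - s) ^ i) • iteratedFDeriv ℝ i F (c s) (fun _ => v))
          (∑ i ∈ Finset.range (n + 1), (W (i + 1) - W i)) t := by
        apply HasDerivAt.fun_sum
        intro i hi
        have hdiff : Differentiable ℝ (iteratedFDeriv ℝ i F) :=
          hF.differentiable_iteratedFDeriv (by exact_mod_cast Finset.mem_range.mp hi)
        have hA := hasDerivAt_iteratedFDeriv_line hdiff x₂ v t
        have hu : HasDerivAt (fun s : ℝ => (i.factorial : ℝ)⁻¹ * (1 - s) ^ i)
            ((i.factorial : ℝ)⁻¹ * ((i : ℝ) * (1 - t) ^ (i - 1) * (-1))) t :=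
          (((hasDerivAt_id t).const_sub 1).pow i).const_mul _
        have h1 : ((i : ℝ) + 1) ≠ 0 := by positivity
        have h2 : (i.factorial : ℝ) ≠ 0 := by exact_mod_cast i.factorial_ne_zero
        have heq : W (i + 1) - W i
            = ((i.factorial : ℝ)⁻¹ * (1 - t) ^ i) •
                iteratedFDeriv ℝ (i + 1) F (x₂ + t • v) (fun _ => v)
              + ((i.factorial : ℝ)⁻¹ * ((i : ℝ) * (1 - t) ^ (i - 1) * (-1))) •
                iteratedFDeriv ℝ i F (x₂ + t • v) (fun _ => v) := by
          simp only [hW, hc, Nat.add_sub_cancel, sub_eq_add_neg, ← neg_smul]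
          congr 1
          · congr 1
            rw [Nat.factorial_succ]
            push_cast
            field_simp
          · congr 1
            ring
        rw [show (fun s => ((i.factorial : ℝ)⁻¹ * (1 - s) ^ i) •
              iteratedFDeriv ℝ i F (c s) (fun _ => v))
            = fun s => ((i.factorial : ℝ)⁻¹ * (1 - s) ^ i) •
              iteratedFDeriv ℝ i F (x₂ + s • v) (fun _ => v) from rfl, heq]
        exact hu.smul hA
      have hlast : HasDerivAt (fun s : ℝ => (((n + 1).factorial : ℝ)⁻¹ * (1 - s) ^ (n + 1)) •
          iteratedFDeriv ℝ (n + 1) F x₂ (fun _ => v))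
          (-(((n.factorial : ℝ))⁻¹ * (1 - t) ^ n) •
            iteratedFDeriv ℝ (n + 1) F x₂ (fun _ => v)) t := by
        have hu : HasDerivAt (fun s : ℝ => ((n + 1).factorial : ℝ)⁻¹ * (1 - s) ^ (n + 1))
            (((n + 1).factorial : ℝ)⁻¹ * (((n : ℝ) + 1) * (1 - t) ^ n * (-1))) t := by
          have := (((hasDerivAt_id t).const_sub 1).pow (n + 1)).const_mul
            (((n + 1).factorial : ℝ)⁻¹)
          simpa using this
        have := hu.smul_const (iteratedFDeriv ℝ (n + 1) F x₂ (fun _ => v))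
        convert this using 2
        rfl
        rfl
        rfl
        have h1 : ((n : ℝ) + 1) ≠ 0 := by positivity
        rw [Nat.factorial_succ]
        push_cast
        field_simp
      have hcomb := hsum.add hlast
      rw [Finset.sum_range_sub (f := W)] at hcomb
      have heq2 : W (n + 1) - W 0
            + (-(((n.factorial : ℝ))⁻¹ * (1 - t) ^ n)) •
              iteratedFDeriv ℝ (n + 1) F x₂ (fun _ => v) = ψ' t := by
        have h1 : ((n : ℝ) + 1) ≠ 0 := by positivity
        have h2 : (n.factorial : ℝ) ≠ 0 := by exact_mod_cast n.factorial_ne_zero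
        simp only [hW, hψ', Nat.add_sub_cancel, Nat.cast_zero, mul_zero, zero_mul, zero_smul,
          sub_zero, Nat.factorial_zero]
        rw [smul_sub, neg_smul, sub_eq_add_neg]
        congr 2
        rw [Nat.factorial_succ]
        push_cast
        field_simp
        ring
        exact (sub_eq_add_neg _ _).symm
      rw [heq2] at hcomb
      exact hcomb
    have hψ1 : ψ 1 = F x₁ := by
      rw [hψ]
      simp only [sub_self]
      rw [Finset.sum_eq_single_of_mem 0 (Finset.mem_range.mpr (Nat.succ_pos n))]
      · simp [hc, add_sub_cancel, hv]
      · intro i _ hi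
        simp [zero_pow hi]
    have hψ0 : ψ 0 = ∑ i ∈ Finset.range (n + 1 + 1),
        (i.factorial : ℝ)⁻¹ • iteratedFDeriv ℝ i F x₂ (fun _ => v) := by
      rw [hψ, Finset.sum_range_succ]
      simp [hc]
    have hbound : ∀ t ∈ Set.Ico (0:ℝ) 1, ‖ψ' t‖ ≤ ‖v‖ ^ (ε + ((n:ℝ) + 1)) := by
      intro t ht
      rw [hψ', norm_smul]
      have h1 : ‖iteratedFDeriv ℝ (n + 1) F (c t) (fun _ => v)
          - iteratedFDeriv ℝ (n + 1) F x₂ (fun _ => v)‖ ≤ ‖v‖ ^ ε * ‖v‖ ^ (n + 1) := by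
        rw [show iteratedFDeriv ℝ (n + 1) F (c t) (fun _ => v)
            - iteratedFDeriv ℝ (n + 1) F x₂ (fun _ => v)
          = (iteratedFDeriv ℝ (n + 1) F (c t) - iteratedFDeriv ℝ (n + 1) F x₂) (fun _ => v)
          from rfl]
        have hct : c t - x₂ = t • v := by simp [hc]
        calc ‖(iteratedFDeriv ℝ (n + 1) F (c t) - iteratedFDeriv ℝ (n + 1) F x₂) (fun _ => v)‖
            ≤ ‖iteratedFDeriv ℝ (n + 1) F (c t) - iteratedFDeriv ℝ (n + 1) F x₂‖
              * ∏ _i : Fin (n + 1), ‖v‖ :=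
              ContinuousMultilinearMap.le_opNorm _ _
          _ ≤ ‖c t - x₂‖ ^ ε * ‖v‖ ^ (n + 1) := by
              rw [Finset.prod_const, Finset.card_univ, Fintype.card_fin]
              exact mul_le_mul_of_nonneg_right (hHol _ _) (by positivity)
          _ ≤ ‖v‖ ^ ε * ‖v‖ ^ (n + 1) := by
              apply mul_le_mul_of_nonneg_right _ (by positivity)
              rw [hct, norm_smul, Real.norm_eq_abs, abs_of_nonneg ht.1]
              exact Real.rpow_le_rpow (mul_nonneg ht.1 (norm_nonneg v))
                (by nlinarith [norm_nonneg v, ht.2.le, ht.1]) hε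
      have h2 : ‖(n.factorial : ℝ)⁻¹ * (1 - t) ^ n‖ ≤ 1 := by
        rw [Real.norm_eq_abs, abs_mul, abs_of_nonneg (by positivity : (0:ℝ) ≤ (n.factorial:ℝ)⁻¹),
          abs_of_nonneg (pow_nonneg (by linarith [ht.2] : (0:ℝ) ≤ 1 - t) n)]
        have hf1 : (1:ℝ) ≤ (n.factorial : ℝ) := by exact_mod_cast n.factorial_pos
        have hle : (1 - t) ^ n ≤ 1 := pow_le_one₀ (by linarith [ht.2]) (by linarith [ht.1])
        nlinarith [inv_le_one_of_one_le₀ hf1, inv_nonneg.mpr (le_trans zero_le_one hf1),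
          pow_nonneg (by linarith [ht.2] : (0:ℝ) ≤ 1 - t) n]
      calc ‖(n.factorial : ℝ)⁻¹ * (1 - t) ^ n‖ * ‖iteratedFDeriv ℝ (n + 1) F (c t) (fun _ => v)
            - iteratedFDeriv ℝ (n + 1) F x₂ (fun _ => v)‖
          ≤ 1 * (‖v‖ ^ ε * ‖v‖ ^ (n + 1)) :=
            mul_le_mul h2 h1 (norm_nonneg _) zero_le_one
        _ = ‖v‖ ^ (ε + ((n:ℝ) + 1)) := by
            rw [one_mul, show ((n:ℝ) + 1) = ((n + 1 : ℕ) : ℝ) by push_cast; ring,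
              ← Real.rpow_natCast ‖v‖ (n + 1),
              ← Real.rpow_add' (norm_nonneg v)
                (ne_of_gt (add_pos_of_nonneg_of_pos hε (by positivity)))]
    have hmv := norm_image_sub_le_of_norm_deriv_le_segment'
      (fun s _ => (key s).hasDerivWithinAt) hbound 1 (Set.right_mem_Icc.mpr zero_le_one)
    rw [hψ1, hψ0] at hmv
    have : ‖F x₁ - ∑ i ∈ Finset.range (n + 1 + 1),
        (i.factorial : ℝ)⁻¹ • iteratedFDeriv ℝ i F x₂ (fun _ => v)‖ ≤ ‖v‖ ^ (ε + ((n:ℝ) + 1)) := by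
      simpa using hmv
    convert this using 2
    push_cast
    ring


/-- Taylor-remainder bound along a path: for an `⌊η⌋`-smooth map whose derivatives are
bounded by 1 and whose top derivative is `(η-⌊η⌋)`-Hölder with constant 1, the Taylor
remainder between two points is bounded by the length of any connecting path raised to
the power `η`. -/
theorem taylor_remainder_path_bound (p k : ℕ) (η : ℝ) (hη : 0 < η)
    (F : EuclideanSpace ℝ (Fin p) → EuclideanSpace ℝ (Fin k))
    (hF : ContDiff ℝ (⌊η⌋₊ : ℕ) F)
    (hbd : ∀ i ≤ ⌊η⌋₊, ∀ x, ‖iteratedFDeriv ℝ i F x‖ ≤ 1)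
    (hHol : ∀ x y, ‖iteratedFDeriv ℝ ⌊η⌋₊ F x - iteratedFDeriv ℝ ⌊η⌋₊ F y‖ ≤
      ‖x - y‖ ^ (η - (⌊η⌋₊ : ℝ)))
    (x₁ x₂ : EuclideanSpace ℝ (Fin p))
    (γ γ' : ℝ → EuclideanSpace ℝ (Fin p))
    (hγ0 : γ 0 = x₂) (hγ1 : γ 1 = x₁)
    (hγderiv : ∀ t ∈ Set.Icc (0 : ℝ) 1, HasDerivAt γ (γ' t) t)
    (hγ'cont : ContinuousOn γ' (Set.Icc (0 : ℝ) 1)) :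
    ‖F x₁ - ∑ i ∈ Finset.range (⌊η⌋₊ + 1),
        (i.factorial : ℝ)⁻¹ • iteratedFDeriv ℝ i F x₂ (fun _ => x₁ - x₂)‖ ≤
      (∫ t in (0:ℝ)..1, ‖γ' t‖) ^ η := by
  have hεnn : 0 ≤ η - (⌊η⌋₊ : ℝ) := sub_nonneg.mpr (Nat.floor_le hη.le)
  have hcore := taylor_remainder_core p k ⌊η⌋₊ (η - (⌊η⌋₊ : ℝ)) hεnn F hF hHol x₁ x₂
  rw [sub_add_cancel] at hcore
  -- path length bounds ‖x₁ - x₂‖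
  have hInt : IntervalIntegrable γ' MeasureTheory.volume 0 1 :=
    (hγ'cont.mono (by rw [Set.uIcc_of_le zero_le_one])).intervalIntegrable
  have heq : ∫ t in (0:ℝ)..1, γ' t = γ 1 - γ 0 :=
    intervalIntegral.integral_eq_sub_of_hasDerivAt
      (fun t ht => hγderiv t (by rwa [Set.uIcc_of_le zero_le_one] at ht)) hInt
  have hlen : ‖x₁ - x₂‖ ≤ ∫ t in (0:ℝ)..1, ‖γ' t‖ := by
    calc ‖x₁ - x₂‖ = ‖∫ t in (0:ℝ)..1, γ' t‖ := by rw [heq, hγ1, hγ0]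
      _ ≤ ∫ t in (0:ℝ)..1, ‖γ' t‖ := intervalIntegral.norm_integral_le_integral_norm zero_le_one
  exact hcore.trans (Real.rpow_le_rpow (norm_nonneg _) hlen hη.le)
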